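/- Let q ≥ 2, n ≥ 1, 1 ≤ i ≤ j ≤ n, let f : Σ_q^n → ℝ belong to U_{[i,j]}(n,q), and let r ∈ {1,…,n}. Then: (1) for all k, m ∈ Σ_q, the function f_k^r − f_m^r belongs to U_{[i−1,j−1]}(n−1,q); (2) Σ_{k=0}^{q−1} f_k^r belongs to U_{[i,j]}(n−1,q) provided j ≤ n−1 (and to U_{[i,n−1]}(n−1,q) in general); (3) for every k ∈ Σ_q, the function f_k^r belongs to U_{[i−1,j]}(n−1,q) if j ≤ n−1, and to U_{[i−1,n−1]}(n−1,q) if j = n. -/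

import Mathlib

/-- `f` belongs to the eigenspace `U_k(n,q)` of the Hamming graph `H(n,q)`,
i.e. `λ_k(n,q) · f(x) = Σ_{y ∈ N(x)} f(y)` for every vertex `x`, where
`λ_k(n,q) = n(q-1) - q·k` and `N(x)` is the set of vertices at Hamming distance 1 from `x`. -/
def inU (n q k : ℕ) (f : (Fin n → Fin q) → ℝ) : Prop :=
  ∀ x : Fin n → Fin q,
    ((n : ℝ) * ((q : ℝ) - 1) - (q : ℝ) * (k : ℝ)) * f x =
      ∑ y ∈ Finset.univ.filter (fun y : Fin n → Fin q => hammingDist x y = 1), f y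

/-- `f` belongs to the direct sum `U_{[i,j]}(n,q) = U_i(n,q) ⊕ … ⊕ U_j(n,q)`,
i.e. `f = Σ_{k=i}^{j} g_k` with `g_k ∈ U_k(n,q)`. -/
def inUIJ (n q i j : ℕ) (f : (Fin n → Fin q) → ℝ) : Prop :=
  ∃ g : ℕ → (Fin n → Fin q) → ℝ,
    (∀ k ∈ Finset.Icc i j, inU n q k (g k)) ∧ f = ∑ k ∈ Finset.Icc i j, g k

/-- The cardinality of the support of `f`. -/
noncomputable def suppCard (n q : ℕ) (f : (Fin n → Fin q) → ℝ) : ℕ :=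
  (Finset.univ.filter (fun x : Fin n → Fin q => f x ≠ 0)).card

/-- The restriction `f_k^r` of `f : Σ_q^{n+1} → ℝ` obtained by fixing the coordinate `r`
to the value `k`. -/
def restrictAt {n q : ℕ} (f : (Fin (n + 1) → Fin q) → ℝ) (r : Fin (n + 1)) (k : Fin q) :
    (Fin n → Fin q) → ℝ :=
  fun y => f (r.insertNth k y)

open Finset

lemma hamming_eq_sum {n q : ℕ} (x y : Fin n → Fin q) :
    (hammingDist x y : ℕ) = ∑ i, if x i = y i then 0 else 1 := by
  rw [hammingDist, Finset.card_filter]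
  congr 1; ext i; by_cases h : x i = y i <;> simp [h]

lemma hamming_insertNth {n q : ℕ} (r : Fin (n + 1)) (k m : Fin q) (x z : Fin n → Fin q) :
    hammingDist (r.insertNth k x : Fin (n+1) → Fin q) (r.insertNth m z) =
      (if k = m then 0 else 1) + hammingDist x z := by
  rw [hamming_eq_sum, hamming_eq_sum, Fin.sum_univ_succAbove _ r]
  simp [Fin.insertNth_apply_same, Fin.insertNth_apply_succAbove]

lemma neighbor_sum_split {n q : ℕ} (f : (Fin (n + 1) → Fin q) → ℝ) (r : Fin (n + 1))
    (k : Fin q) (x : Fin n → Fin q) :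
    ∑ y ∈ univ.filter (fun y : Fin (n+1) → Fin q => hammingDist (r.insertNth k x) y = 1), f y
      = (∑ m ∈ univ.erase k, f (r.insertNth m x)) +
        ∑ z ∈ univ.filter (fun z : Fin n → Fin q => hammingDist x z = 1), f (r.insertNth k z) := by
  rw [Finset.sum_filter, ← Equiv.sum_comp (Fin.insertNthEquiv (fun _ => Fin q) r)]
  simp only [Fin.insertNthEquiv, Equiv.coe_fn_mk]
  rw [Fintype.sum_prod_type, ← Finset.add_sum_erase _ _ (Finset.mem_univ k), add_comm]
  congr 1
  · apply Finset.sum_congr rfl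
    intro m hm
    have hmk : ¬ (k = m) := fun h => (Finset.mem_erase.mp hm).1 h.symm
    have key : ∀ z : Fin n → Fin q,
        (if hammingDist (r.insertNth k x : Fin (n+1) → Fin q) (r.insertNth m z) = 1
          then f (r.insertNth m z) else 0)
        = if x = z then f (r.insertNth m z) else 0 := by
      intro z
      rw [hamming_insertNth]
      simp only [hmk, if_false]
      congr 1
      simp only [eq_iff_iff]
      constructor
      · intro h
        have : hammingDist x z = 0 := by omega
        exact hammingDist_eq_zero.mp this
      · intro h; subst h; simp
    erw [Finset.sum_congr rfl (fun z _ => key z)]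
    simp
  · rw [Finset.sum_filter]
    apply Finset.sum_congr rfl
    intro z _
    erw [hamming_insertNth]
    simp

/-- The basic line relation. -/
lemma lineRel {n q K : ℕ} {f : (Fin (n + 1) → Fin q) → ℝ} (hf : inU (n+1) q K f)
    (r : Fin (n + 1)) (a : Fin q) (x : Fin n → Fin q) :
    (((n:ℝ)+1) * ((q : ℝ) - 1) - (q : ℝ) * (K : ℝ)) * restrictAt f r a x =
      ((∑ m : Fin q, restrictAt f r m x) - restrictAt f r a x) +
        ∑ z ∈ univ.filter (fun z : Fin n → Fin q => hammingDist x z = 1),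
          restrictAt f r a z := by
  have h := hf (r.insertNth a x)
  rw [neighbor_sum_split] at h
  rw [Finset.sum_erase_eq_sub (Finset.mem_univ a)] at h
  push_cast at h ⊢
  convert h using 2 <;> rfl

lemma inU_diff {n q K : ℕ} {f : (Fin (n + 1) → Fin q) → ℝ} (hf : inU (n+1) q (K+1) f)
    (r : Fin (n + 1)) (a b : Fin q) :
    inU n q K (restrictAt f r a - restrictAt f r b) := by
  intro x
  have ha := lineRel hf r a x
  have hb := lineRel hf r b x
  have hsum : ∑ y ∈ univ.filter (fun z : Fin n → Fin q => hammingDist x z = 1),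
      (restrictAt f r a - restrictAt f r b) y
      = (∑ z ∈ univ.filter (fun z : Fin n → Fin q => hammingDist x z = 1), restrictAt f r a z)
        - ∑ z ∈ univ.filter (fun z : Fin n → Fin q => hammingDist x z = 1), restrictAt f r b z := by
    rw [← Finset.sum_sub_distrib]; rfl
  rw [hsum]
  simp only [Pi.sub_apply]
  push_cast at ha hb ⊢
  nlinarith [ha, hb]

lemma inU_sumRestrict {n q K : ℕ} {f : (Fin (n + 1) → Fin q) → ℝ} (hf : inU (n+1) q K f)
    (r : Fin (n + 1)) :
    inU n q K (∑ a : Fin q, restrictAt f r a) := by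
  intro x
  have hL := Finset.sum_congr rfl (fun a (_ : a ∈ (univ : Finset (Fin q))) => lineRel hf r a x)
  rw [← Finset.mul_sum] at hL
  have hRsum : ∑ a : Fin q, (((∑ m : Fin q, restrictAt f r m x) - restrictAt f r a x) +
        ∑ z ∈ univ.filter (fun z : Fin n → Fin q => hammingDist x z = 1), restrictAt f r a z)
      = ((q:ℝ) * (∑ m : Fin q, restrictAt f r m x) - ∑ a : Fin q, restrictAt f r a x)
        + ∑ z ∈ univ.filter (fun z : Fin n → Fin q => hammingDist x z = 1),
            ∑ a : Fin q, restrictAt f r a z := by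
    rw [Finset.sum_add_distrib, Finset.sum_sub_distrib, Finset.sum_const, Finset.card_univ,
      Fintype.card_fin, Finset.sum_comm]
    simp [nsmul_eq_mul]
  rw [hRsum] at hL
  have happ : ∀ y, (∑ a : Fin q, restrictAt f r a) y = ∑ a : Fin q, restrictAt f r a y := by
    intro y; simp [Finset.sum_apply]
  simp only [happ]
  nlinarith [hL]

lemma inU_zero (n q k : ℕ) : inU n q k (0 : (Fin n → Fin q) → ℝ) := by
  intro x; simp

lemma inU_smul {n q k : ℕ} {f : (Fin n → Fin q) → ℝ} (c : ℝ) (hf : inU n q k f) :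
    inU n q k (c • f) := by
  intro x
  have := hf x
  simp only [Pi.smul_apply, smul_eq_mul, Finset.mul_sum]
  rw [mul_left_comm, this, Finset.mul_sum]

lemma inU_sum {n q k : ℕ} {ι : Type*} (s : Finset ι) {h : ι → (Fin n → Fin q) → ℝ}
    (hh : ∀ a ∈ s, inU n q k (h a)) : inU n q k (∑ a ∈ s, h a) := by
  intro x
  rw [Finset.sum_apply, Finset.mul_sum]
  rw [Finset.sum_congr rfl (fun a ha => hh a ha x)]
  rw [Finset.sum_comm]
  exact Finset.sum_congr rfl (fun y _ => (Finset.sum_apply _ _ _).symm)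

lemma inU_vanish {q : ℕ} (hq : 2 ≤ q) :
    ∀ (n K : ℕ), n < K → ∀ {h : (Fin n → Fin q) → ℝ}, inU n q K h → h = 0 := by
  intro n
  induction n with
  | zero =>
    intro K hK h hh
    funext x
    have hx := hh x
    have hempty : (Finset.univ.filter (fun y : Fin 0 → Fin q => hammingDist x y = 1)) = ∅ := by
      apply Finset.filter_false_of_mem
      intro y _
      have : hammingDist x y ≤ 0 := le_trans (hammingDist_le_card_fintype) (by simp)
      omega
    rw [hempty] at hx
    simp only [Finset.sum_empty, Nat.cast_zero, zero_mul, zero_sub, neg_mul, neg_eq_zero] at hx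
    have hqK : (q : ℝ) * (K : ℝ) ≠ 0 := by
      have h2 : (0:ℝ) < q := by positivity
      have h3 : (0:ℝ) < K := by
        have : 0 < K := by omega
        positivity
      positivity
    have := mul_eq_zero.mp hx
    tauto
  | succ n IH =>
    intro K hK h hh
    obtain ⟨K', rfl⟩ : ∃ K', K = K' + 1 := ⟨K - 1, by omega⟩
    set r : Fin (n+1) := ⟨0, Nat.succ_pos n⟩
    have hdiff : ∀ a b : Fin q, restrictAt h r a = restrictAt h r b := by
      intro a b
      have := IH K' (by omega) (inU_diff hh r a b)
      funext y
      have := congrFun this y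
      simp only [Pi.sub_apply, Pi.zero_apply] at this
      linarith
    have hsum : (∑ a : Fin q, restrictAt h r a) = 0 :=
      IH (K'+1) (by omega) (inU_sumRestrict hh r)
    have hzero : ∀ a : Fin q, restrictAt h r a = 0 := by
      intro a
      funext y
      have hy := congrFun hsum y
      rw [Finset.sum_apply] at hy
      rw [Finset.sum_congr rfl (fun m (_ : m ∈ (univ : Finset (Fin q))) =>
        congrFun (hdiff m a) y)] at hy
      rw [Finset.sum_const, Finset.card_univ, Fintype.card_fin, nsmul_eq_mul] at hy
      have hq0 : (q : ℝ) ≠ 0 := by positivity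
      have := mul_eq_zero.mp hy
      simp only [Pi.zero_apply]
      tauto
    funext y
    have : h y = restrictAt h r (y r) (r.removeNth y) := by
      simp [restrictAt, Fin.insertNth_self_removeNth]
    rw [this, hzero]
    rfl

lemma inUIJ_zero (n q i j : ℕ) : inUIJ n q i j (0 : (Fin n → Fin q) → ℝ) :=
  ⟨fun _ => 0, fun k _ => inU_zero n q k, by simp⟩

lemma inUIJ_of_inU {n q i j K : ℕ} {f : (Fin n → Fin q) → ℝ} (hf : inU n q K f)
    (h1 : i ≤ K) (h2 : K ≤ j) : inUIJ n q i j f := by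
  refine ⟨fun k => if k = K then f else 0, ?_, ?_⟩
  · intro k _
    by_cases h : k = K <;> simp [h, hf, inU_zero]
  · rw [Finset.sum_ite_eq' (Finset.Icc i j) K (fun _ => f)]
    simp [Finset.mem_Icc, h1, h2]

lemma inUIJ_add {n q i j : ℕ} {f h : (Fin n → Fin q) → ℝ} (hf : inUIJ n q i j f)
    (hh : inUIJ n q i j h) : inUIJ n q i j (f + h) := by
  obtain ⟨g1, hg1, rfl⟩ := hf
  obtain ⟨g2, hg2, rfl⟩ := hh
  exact ⟨fun k => g1 k + g2 k, fun k hk => by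
    intro x
    have h1 := hg1 k hk x
    have h2 := hg2 k hk x
    simp only [Pi.add_apply, mul_add, h1, h2, ← Finset.sum_add_distrib],
    by rw [← Finset.sum_add_distrib]⟩

lemma inUIJ_sum {n q i j : ℕ} {ι : Type*} (s : Finset ι) {h : ι → (Fin n → Fin q) → ℝ}
    (hh : ∀ a ∈ s, inUIJ n q i j (h a)) : inUIJ n q i j (∑ a ∈ s, h a) := by
  classical
  induction s using Finset.induction_on with
  | empty => simpa using inUIJ_zero n q i j
  | insert _ _ hx ih =>
    rw [Finset.sum_insert hx]
    exact inUIJ_add (hh _ (Finset.mem_insert_self _ _))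
      (ih (fun a ha => hh a (Finset.mem_insert_of_mem ha)))

/-- Decomposition of a single restriction (pure algebra, holds for any `g`). -/
lemma restrict_decomp {n q : ℕ} (hq : 2 ≤ q) (g : (Fin (n + 1) → Fin q) → ℝ)
    (r : Fin (n + 1)) (a : Fin q) :
    restrictAt g r a = (q:ℝ)⁻¹ • (∑ m : Fin q, restrictAt g r m)
      + (q:ℝ)⁻¹ • (∑ m : Fin q, (restrictAt g r a - restrictAt g r m)) := by
  have hq0 : (q : ℝ) ≠ 0 := by positivity
  funext y
  have h1 : (∑ m : Fin q, (restrictAt g r a - restrictAt g r m)) y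
      = (q:ℝ) * restrictAt g r a y - ∑ m : Fin q, restrictAt g r m y := by
    rw [Finset.sum_apply]
    simp only [Pi.sub_apply]
    rw [Finset.sum_sub_distrib, Finset.sum_const, Finset.card_univ, Fintype.card_fin,
      nsmul_eq_mul]
  simp only [Pi.add_apply, Pi.smul_apply, smul_eq_mul, h1, Finset.sum_apply]
  field_simp
  ring

/-- For `f ∈ U_{[i,j]}(n+1,q)` with `1 ≤ i ≤ j ≤ n+1` and any coordinate `r`:
(1) `f_k^r - f_m^r ∈ U_{[i-1,j-1]}(n,q)` for all `k, m ∈ Σ_q`;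
(2) `Σ_{k} f_k^r ∈ U_{[i, min j n]}(n,q)` (which is `U_{[i,j]}(n,q)` when `j ≤ n`);
(3) `f_k^r ∈ U_{[i-1, min j n]}(n,q)` for every `k ∈ Σ_q` (i.e. `U_{[i-1,j]}(n,q)`
when `j ≤ n` and `U_{[i-1,n]}(n,q)` when `j = n+1`). -/
theorem stmt15 (q n i j : ℕ) (hq : 2 ≤ q) (hi : 1 ≤ i) (hij : i ≤ j) (hjn : j ≤ n + 1)
    (f : (Fin (n + 1) → Fin q) → ℝ) (hf : inUIJ (n + 1) q i j f) (r : Fin (n + 1)) :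
    (∀ k m : Fin q, inUIJ n q (i - 1) (j - 1) (restrictAt f r k - restrictAt f r m)) ∧
    inUIJ n q i (min j n) (∑ k : Fin q, restrictAt f r k) ∧
    (∀ k : Fin q, inUIJ n q (i - 1) (min j n) (restrictAt f r k)) := by
  obtain ⟨g, hg, hfe⟩ := hf
  have hrestrict : ∀ a : Fin q, restrictAt f r a = ∑ K ∈ Finset.Icc i j, restrictAt (g K) r a := by
    intro a
    funext y
    simp [restrictAt, hfe, Finset.sum_apply]
  refine ⟨?_, ?_, ?_⟩
  · -- differences
    intro k m
    have heq : restrictAt f r k - restrictAt f r m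
        = ∑ K ∈ Finset.Icc i j, (restrictAt (g K) r k - restrictAt (g K) r m) := by
      rw [hrestrict k, hrestrict m, ← Finset.sum_sub_distrib]
    rw [heq]
    apply inUIJ_sum
    intro K hK
    rw [Finset.mem_Icc] at hK
    obtain ⟨K', rfl⟩ : ∃ K', K = K' + 1 := ⟨K - 1, by omega⟩
    exact inUIJ_of_inU (inU_diff (hg _ (Finset.mem_Icc.mpr hK)) r k m) (by omega) (by omega)
  · -- total sum
    have heq : (∑ k : Fin q, restrictAt f r k)
        = ∑ K ∈ Finset.Icc i j, (∑ a : Fin q, restrictAt (g K) r a) := by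
      rw [Finset.sum_congr rfl (fun a (_ : a ∈ (univ : Finset (Fin q))) => hrestrict a)]
      rw [Finset.sum_comm]
    rw [heq]
    apply inUIJ_sum
    intro K hK
    rw [Finset.mem_Icc] at hK
    by_cases hKn : K ≤ n
    · exact inUIJ_of_inU (inU_sumRestrict (hg _ (Finset.mem_Icc.mpr hK)) r) hK.1
        (le_min hK.2 hKn)
    · rw [inU_vanish hq n K (by omega) (inU_sumRestrict (hg _ (Finset.mem_Icc.mpr hK)) r)]
      exact inUIJ_zero n q i (min j n)
  · -- single restrictions
    intro a
    rw [hrestrict a]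
    apply inUIJ_sum
    intro K hK
    rw [Finset.mem_Icc] at hK
    obtain ⟨K', rfl⟩ : ∃ K', K = K' + 1 := ⟨K - 1, by omega⟩
    rw [restrict_decomp hq (g (K' + 1)) r a]
    apply inUIJ_add
    · by_cases hKn : K' + 1 ≤ n
      · exact inUIJ_of_inU
          (inU_smul _ (inU_sumRestrict (hg _ (Finset.mem_Icc.mpr hK)) r))
          (by omega) (le_min (by omega) hKn)
      · rw [inU_vanish hq n (K'+1) (by omega)
          (inU_sumRestrict (hg _ (Finset.mem_Icc.mpr hK)) r)]
        rw [smul_zero]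
        exact inUIJ_zero n q (i-1) (min j n)
    · refine inUIJ_of_inU (inU_smul _ (inU_sum Finset.univ
        (fun m _ => inU_diff (hg _ (Finset.mem_Icc.mpr hK)) r a m)))
        (by omega) (le_min (by omega) (by omega))
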